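/- Admissibility of Subsumption: assume the parameters of superLL satisfy the subsumption axioms (sb1)–(sb6). Consider the system obtained from superLL(E,de,co,dg,p) by removing the functorial promotion rule (p) and the unary contraction (subsumption) rule (co with k = 1) and adding the ordered promotion rule (p_≤). Then subsumption is admissible in this system: if ⊢ ?_{e1}A, Γ is provable in it and e1 ≤ e'1 (i.e. co_1(e1,e'1)), then ⊢ ?_{e'1}A, Γ is provable in it. More generally, if ⊢ ?_{e1}A1,…,?_{en}An, Γ is provable in it and ei ≤ e'i for all 1 ≤ i ≤ n, then ⊢ ?_{e'1}A1,…,?_{e'n}An, Γ is provable in it. -/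

import Mathlib

namespace SuperLLStmt

/-- Linear logic formulas with exponential connectives indexed by signatures in `E`. -/
inductive Formula (E : Type) : Type
  | var : ℕ → Formula E
  | covar : ℕ → Formula E
  | tens : Formula E → Formula E → Formula E
  | parr : Formula E → Formula E → Formula E
  | one : Formula E
  | bot : Formula E
  | awith : Formula E → Formula E → Formula E
  | aplus : Formula E → Formula E → Formula E
  | top : Formula E
  | zero : Formula E
  | oc : E → Formula E → Formula E
  | wn : E → Formula E → Formula E

namespace Formula

/-- Duality on formulas. -/
def dual {E : Type} : Formula E → Formula E
  | var n => covar n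
  | covar n => var n
  | tens A B => parr A.dual B.dual
  | parr A B => tens A.dual B.dual
  | one => bot
  | bot => one
  | awith A B => aplus A.dual B.dual
  | aplus A B => awith A.dual B.dual
  | top => zero
  | zero => top
  | oc e A => wn e A.dual
  | wn e A => oc e A.dual

end Formula

/-- superLL with the ordered promotion rule instead of functorial promotion, and with
the unary contraction (subsumption) rule removed (contraction is restricted to arities
`≠ 1`). -/
inductive SuperLLO {E : Type} (de : E → Prop) (co : List E → E → Prop)
    (dg : E → E → E → Prop) (p : ℕ → E → Prop) : Bool → List (Formula E) → Prop
  | ax (b) (A : Formula E) : SuperLLO de co dg p b [A, A.dual]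
  | ex {b Γ Δ} : SuperLLO de co dg p b Γ → Γ.Perm Δ → SuperLLO de co dg p b Δ
  | cut {A : Formula E} {Γ Δ : List (Formula E)} : SuperLLO de co dg p true (A :: Γ) →
      SuperLLO de co dg p true (A.dual :: Δ) → SuperLLO de co dg p true (Γ ++ Δ)
  | tens {b} {A B : Formula E} {Γ Δ : List (Formula E)} : SuperLLO de co dg p b (A :: Γ) →
      SuperLLO de co dg p b (B :: Δ) → SuperLLO de co dg p b (A.tens B :: (Γ ++ Δ))
  | parr {b} {A B : Formula E} {Γ : List (Formula E)} : SuperLLO de co dg p b (A :: B :: Γ) →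
      SuperLLO de co dg p b (A.parr B :: Γ)
  | one (b) : SuperLLO de co dg p b [Formula.one]
  | bot {b Γ} : SuperLLO de co dg p b Γ → SuperLLO de co dg p b (Formula.bot :: Γ)
  | awith {b} {A B : Formula E} {Γ : List (Formula E)} : SuperLLO de co dg p b (A :: Γ) →
      SuperLLO de co dg p b (B :: Γ) → SuperLLO de co dg p b (A.awith B :: Γ)
  | aplus1 {b} {A B : Formula E} {Γ : List (Formula E)} : SuperLLO de co dg p b (A :: Γ) →
      SuperLLO de co dg p b (A.aplus B :: Γ)
  | aplus2 {b} {A B : Formula E} {Γ : List (Formula E)} : SuperLLO de co dg p b (B :: Γ) →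
      SuperLLO de co dg p b (A.aplus B :: Γ)
  | top (b) (Γ) : SuperLLO de co dg p b (Formula.top :: Γ)
  | der {b e A Γ} : de e → SuperLLO de co dg p b (A :: Γ) →
      SuperLLO de co dg p b (Formula.wn e A :: Γ)
  | con {b} {l : List E} {e A Γ} : co l e → l.length ≠ 1 →
      SuperLLO de co dg p b (l.map (fun ei => Formula.wn ei A) ++ Γ) →
      SuperLLO de co dg p b (Formula.wn e A :: Γ)
  | dig {b e1 e2 e A Γ} : dg e1 e2 e →
      SuperLLO de co dg p b (Formula.wn e1 (Formula.wn e2 A) :: Γ) →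
      SuperLLO de co dg p b (Formula.wn e A :: Γ)
  | promle {b} {e : E} {A : Formula E} {es : List E} {As : List (Formula E)} :
      (∀ ei ∈ es, co [e] ei) → es.length = As.length → p As.length e →
      SuperLLO de co dg p b (A :: As) →
      SuperLLO de co dg p b (Formula.oc e A :: List.zipWith Formula.wn es As)

section Aux

variable {E : Type}

theorem Formula.dual_dual (A : Formula E) : A.dual.dual = A := by
  induction A <;> simp [Formula.dual, *]

/-- Pointwise subsumption relation on formulas. -/
def Sub (co : List E → E → Prop) (B C : Formula E) : Prop :=
  B = C ∨ ∃ e e' A, co [e] e' ∧ B = Formula.wn e A ∧ C = Formula.wn e' A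

theorem Sub.refl (co : List E → E → Prop) (A : Formula E) : Sub co A A := Or.inl rfl

theorem forall₂_sub_refl (co : List E → E → Prop) (l : List (Formula E)) :
    List.Forall₂ (Sub co) l l := List.forall₂_same.2 fun A _ => Sub.refl co A

theorem perm_forall₂ {α β : Type*} {R : α → β → Prop} :
    ∀ {l₁ l₂ : List α} {l₃ : List β}, l₁.Perm l₂ → List.Forall₂ R l₂ l₃ →
      ∃ l₄, List.Forall₂ R l₁ l₄ ∧ l₄.Perm l₃ := by
  intro l₁ l₂ l₃ hp
  induction hp generalizing l₃ with
  | nil => intro h; exact ⟨l₃, h, List.Perm.refl _⟩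
  | cons a _ ih =>
    intro h
    replace h := List.forall₂_cons_left_iff.1 h
    obtain ⟨b, u, hab, h, rfl⟩ := h
    obtain ⟨l₄, h₁, h₂⟩ := ih h
    exact ⟨b :: l₄, List.Forall₂.cons hab h₁, h₂.cons b⟩
  | swap a a' _ =>
    intro h
    replace h := List.forall₂_cons_left_iff.1 h
    obtain ⟨b1, u1, h1, h, rfl⟩ := h
    replace h := List.forall₂_cons_left_iff.1 h
    obtain ⟨b2, u2, h2, h, rfl⟩ := h
    exact ⟨b2 :: b1 :: u2, List.Forall₂.cons h2 (List.Forall₂.cons h1 h),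
      List.Perm.swap b1 b2 u2⟩
  | trans _ _ ih1 ih2 =>
    intro h
    obtain ⟨l₄, h₁, h₂⟩ := ih2 h
    obtain ⟨l₅, h₃, h₄⟩ := ih1 h₁
    exact ⟨l₅, h₃, h₄.trans h₂⟩

theorem forall₂_append_split {α β : Type*} {R : α → β → Prop} :
    ∀ {l₁ l₂ : List α} {l : List β}, List.Forall₂ R (l₁ ++ l₂) l →
      ∃ m₁ m₂, l = m₁ ++ m₂ ∧ List.Forall₂ R l₁ m₁ ∧ List.Forall₂ R l₂ m₂ := by
  intro l₁
  induction l₁ with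
  | nil => intro l₂ l h; exact ⟨[], l, rfl, List.Forall₂.nil, h⟩
  | cons a l₁ ih =>
    intro l₂ l h
    replace h := List.forall₂_cons_left_iff.1 h
    obtain ⟨b, u, hab, h, rfl⟩ := h
    obtain ⟨m₁, m₂, rfl, h₁, h₂⟩ := ih h
    exact ⟨b :: m₁, m₂, rfl, List.Forall₂.cons hab h₁, h₂⟩

theorem forall₂_zipWith_wn {co : List E → E → Prop} :
    ∀ {es : List E} {As : List (Formula E)} {rest : List (Formula E)},
      es.length = As.length →
      List.Forall₂ (Sub co) (List.zipWith Formula.wn es As) rest →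
      ∃ es', rest = List.zipWith Formula.wn es' As ∧
        List.Forall₂ (fun a b => a = b ∨ co [a] b) es es' := by
  intro es
  induction es with
  | nil => intro As rest _ h; cases h; exact ⟨[], rfl, List.Forall₂.nil⟩
  | cons e es ih =>
    intro As rest hlen h
    cases As with
    | nil => simp at hlen
    | cons A As =>
      simp only [List.zipWith_cons_cons] at h
      replace h := List.forall₂_cons_left_iff.1 h
      obtain ⟨C, u, hab, h, rfl⟩ := h
      obtain ⟨es', rfl, hes⟩ := ih (by simpa using hlen) h
      rcases hab with rfl | ⟨f, f', B, hff, hB, rfl⟩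
      · exact ⟨e :: es', rfl, List.Forall₂.cons (Or.inl rfl) hes⟩
      · cases hB
        exact ⟨f' :: es', rfl, List.Forall₂.cons (Or.inr hff) hes⟩

theorem forall₂_mem_right {α β : Type*} {R : α → β → Prop} :
    ∀ {l : List α} {l' : List β}, List.Forall₂ R l l' → ∀ {b}, b ∈ l' →
      ∃ a ∈ l, R a b := by
  intro l l' h
  induction h with
  | nil => intro b hb; simp at hb
  | cons hab _ ih =>
    intro b hb
    rcases List.mem_cons.1 hb with rfl | hb
    · exact ⟨_, List.mem_cons_self, hab⟩
    · obtain ⟨a, ha, hr⟩ := ih hb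
      exact ⟨a, List.mem_cons_of_mem _ ha, hr⟩

variable {de : E → Prop} {co : List E → E → Prop} {dg : E → E → E → Prop} {p : ℕ → E → Prop}

/-- `⊢ !_e A, ?_{e'} A⊥` when `e ≤ e'`. -/
theorem prom_ax (sb1 : ∀ e : E, p 1 e) {e e' : E} (h : co [e] e') (b : Bool)
    (A : Formula E) : SuperLLO de co dg p b [Formula.oc e A, Formula.wn e' A.dual] :=
  SuperLLO.promle (es := [e']) (As := [A.dual])
    (fun ei hei => by obtain rfl := List.mem_singleton.1 hei; exact h) rfl (sb1 e)
    (SuperLLO.ax b A)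

theorem sub_main
    (sb1 : ∀ e : E, p 1 e)
    (sb3 : ∀ e1 e2 e3 : E, co [e1] e2 → co [e2] e3 → co [e1] e3)
    (sb4 : ∀ e1 e2 : E, de e1 → co [e1] e2 → de e2)
    (sb5 : ∀ (l : List E) (e1 e2 : E), co l e1 → co [e1] e2 →
      ∃ l' : List E, List.Forall₂ (fun εi ε'i => co [εi] ε'i) l l' ∧ co l' e2)
    (sb6 : ∀ ε1 ε2 e1 e2 : E, dg ε1 ε2 e1 → co [e1] e2 →
      ∃ ε'1 : E, co [ε1] ε'1 ∧ dg ε'1 ε2 e2)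
    {b : Bool} {Δ : List (Formula E)} (h : SuperLLO de co dg p b Δ) :
    ∀ Δ', List.Forall₂ (Sub co) Δ Δ' → SuperLLO de co dg p b Δ' := by
  induction h with
  | ax b A =>
    intro Δ' h
    replace h := List.forall₂_cons_left_iff.1 h
    obtain ⟨B, u, h1, h, rfl⟩ := h
    replace h := List.forall₂_cons_left_iff.1 h
    obtain ⟨C, u', h2, h, rfl⟩ := h
    cases h
    rcases h1 with rfl | ⟨e, e', A0, hee, rfl, rfl⟩
    · rcases h2 with rfl | ⟨e, e', A0, hee, hA, rfl⟩
      · exact SuperLLO.ax b A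
      · have hB : A = Formula.oc e A0.dual := by
          have := congrArg Formula.dual hA
          rwa [Formula.dual_dual] at this
        subst hB
        have := prom_ax (de := de) (dg := dg) sb1 hee b A0.dual
        rwa [Formula.dual_dual] at this
    · rcases h2 with rfl | ⟨f, f', B0, hff, hB, rfl⟩
      · have h0 := prom_ax (de := de) (dg := dg) sb1 hee b A0.dual
        rw [Formula.dual_dual] at h0
        show SuperLLO de co dg p b [Formula.wn e' A0, Formula.oc e A0.dual]
        exact SuperLLO.ex h0 (List.Perm.swap _ _ _)
      · exact absurd hB (by simp [Formula.dual])
  | ex _ hperm ih =>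
    intro Δ' h
    obtain ⟨l₄, h₁, h₂⟩ := perm_forall₂ hperm h
    exact SuperLLO.ex (ih l₄ h₁) h₂
  | cut _ _ ih1 ih2 =>
    intro Δ' h
    obtain ⟨m₁, m₂, rfl, h₁, h₂⟩ := forall₂_append_split h
    exact SuperLLO.cut (ih1 _ (List.Forall₂.cons (Sub.refl co _) h₁))
      (ih2 _ (List.Forall₂.cons (Sub.refl co _) h₂))
  | tens _ _ ih1 ih2 =>
    intro Δ' h
    replace h := List.forall₂_cons_left_iff.1 h
    obtain ⟨C, u, h1, h, rfl⟩ := h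
    obtain ⟨m₁, m₂, rfl, h₁, h₂⟩ := forall₂_append_split h
    rcases h1 with rfl | ⟨e, e', A0, hee, hA, rfl⟩
    · exact SuperLLO.tens (ih1 _ (List.Forall₂.cons (Sub.refl co _) h₁))
        (ih2 _ (List.Forall₂.cons (Sub.refl co _) h₂))
    · exact absurd hA (by simp)
  | parr _ ih =>
    intro Δ' h
    replace h := List.forall₂_cons_left_iff.1 h
    obtain ⟨C, u, h1, h, rfl⟩ := h
    rcases h1 with rfl | ⟨e, e', A0, hee, hA, rfl⟩
    · exact SuperLLO.parr (ih _ (List.Forall₂.cons (Sub.refl co _)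
        (List.Forall₂.cons (Sub.refl co _) h)))
    · exact absurd hA (by simp)
  | one b =>
    intro Δ' h
    replace h := List.forall₂_cons_left_iff.1 h
    obtain ⟨C, u, h1, h, rfl⟩ := h
    cases h
    rcases h1 with rfl | ⟨e, e', A0, hee, hA, rfl⟩
    · exact SuperLLO.one b
    · exact absurd hA (by simp)
  | bot _ ih =>
    intro Δ' h
    replace h := List.forall₂_cons_left_iff.1 h
    obtain ⟨C, u, h1, h, rfl⟩ := h
    rcases h1 with rfl | ⟨e, e', A0, hee, hA, rfl⟩
    · exact SuperLLO.bot (ih _ h)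
    · exact absurd hA (by simp)
  | awith _ _ ih1 ih2 =>
    intro Δ' h
    replace h := List.forall₂_cons_left_iff.1 h
    obtain ⟨C, u, h1, h, rfl⟩ := h
    rcases h1 with rfl | ⟨e, e', A0, hee, hA, rfl⟩
    · exact SuperLLO.awith (ih1 _ (List.Forall₂.cons (Sub.refl co _) h))
        (ih2 _ (List.Forall₂.cons (Sub.refl co _) h))
    · exact absurd hA (by simp)
  | aplus1 _ ih =>
    intro Δ' h
    replace h := List.forall₂_cons_left_iff.1 h
    obtain ⟨C, u, h1, h, rfl⟩ := h
    rcases h1 with rfl | ⟨e, e', A0, hee, hA, rfl⟩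
    · exact SuperLLO.aplus1 (ih _ (List.Forall₂.cons (Sub.refl co _) h))
    · exact absurd hA (by simp)
  | aplus2 _ ih =>
    intro Δ' h
    replace h := List.forall₂_cons_left_iff.1 h
    obtain ⟨C, u, h1, h, rfl⟩ := h
    rcases h1 with rfl | ⟨e, e', A0, hee, hA, rfl⟩
    · exact SuperLLO.aplus2 (ih _ (List.Forall₂.cons (Sub.refl co _) h))
    · exact absurd hA (by simp)
  | top b Γ =>
    intro Δ' h
    replace h := List.forall₂_cons_left_iff.1 h
    obtain ⟨C, u, h1, h, rfl⟩ := h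
    rcases h1 with rfl | ⟨e, e', A0, hee, hA, rfl⟩
    · exact SuperLLO.top b _
    · exact absurd hA (by simp)
  | der hde _ ih =>
    intro Δ' h
    replace h := List.forall₂_cons_left_iff.1 h
    obtain ⟨C, u, h1, h, rfl⟩ := h
    rcases h1 with rfl | ⟨e, e', A0, hee, hA, rfl⟩
    · exact SuperLLO.der hde (ih _ (List.Forall₂.cons (Sub.refl co _) h))
    · cases hA
      exact SuperLLO.der (sb4 _ _ hde hee) (ih _ (List.Forall₂.cons (Sub.refl co _) h))
  | con hco hlen _ ih =>
    intro Δ' h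
    replace h := List.forall₂_cons_left_iff.1 h
    obtain ⟨C, u, h1, h, rfl⟩ := h
    rcases h1 with rfl | ⟨e, e', A0, hee, hA, rfl⟩
    · exact SuperLLO.con hco hlen (ih _ (List.rel_append (forall₂_sub_refl co _) h))
    · cases hA
      obtain ⟨l', hl', hco'⟩ := sb5 _ _ _ hco hee
      refine SuperLLO.con hco' (by rw [← hl'.length_eq]; exact hlen) (ih _ ?_)
      refine List.rel_append ?_ h
      rw [List.forall₂_map_left_iff, List.forall₂_map_right_iff]
      exact hl'.imp fun {a b} hab => Or.inr ⟨a, b, _, hab, rfl, rfl⟩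
  | dig hdg _ ih =>
    intro Δ' h
    replace h := List.forall₂_cons_left_iff.1 h
    obtain ⟨C, u, h1, h, rfl⟩ := h
    rcases h1 with rfl | ⟨e, e', A0, hee, hA, rfl⟩
    · exact SuperLLO.dig hdg (ih _ (List.Forall₂.cons (Sub.refl co _) h))
    · cases hA
      obtain ⟨ε', hε', hdg'⟩ := sb6 _ _ _ _ hdg hee
      refine SuperLLO.dig hdg' (ih _ (List.Forall₂.cons ?_ h))
      exact Or.inr ⟨_, _, _, hε', rfl, rfl⟩
  | promle hes hlen hp hprem =>
    intro Δ' h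
    replace h := List.forall₂_cons_left_iff.1 h
    obtain ⟨C, u, h1, h, rfl⟩ := h
    rcases h1 with rfl | ⟨e, e', A0, hee, hA, rfl⟩
    · obtain ⟨es', rfl, hes'⟩ := forall₂_zipWith_wn hlen h
      refine SuperLLO.promle ?_ (by rw [← hes'.length_eq]; exact hlen) hp hprem
      intro ei hei
      obtain ⟨a, ha, hrel⟩ := forall₂_mem_right hes' hei
      rcases hrel with rfl | hrel
      · exact hes a ha
      · exact sb3 _ _ _ (hes a ha) hrel
    · exact absurd hA (by simp)

end Aux

/-- Admissibility of subsumption in the system with the ordered promotion rule, under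
the subsumption axioms (here `e ≤ e'` is `co [e] e'`). -/
theorem superLLO_subsumption_admissible {E : Type}
    (de : E → Prop) (co : List E → E → Prop) (dg : E → E → E → Prop) (p : ℕ → E → Prop)
    (sb1 : ∀ e : E, p 1 e)
    (sb2 : ∀ e : E, co [e] e)
    (sb3 : ∀ e1 e2 e3 : E, co [e1] e2 → co [e2] e3 → co [e1] e3)
    (sb4 : ∀ e1 e2 : E, de e1 → co [e1] e2 → de e2)
    (sb5 : ∀ (l : List E) (e1 e2 : E), co l e1 → co [e1] e2 →
      ∃ l' : List E, List.Forall₂ (fun εi ε'i => co [εi] ε'i) l l' ∧ co l' e2)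
    (sb6 : ∀ ε1 ε2 e1 e2 : E, dg ε1 ε2 e1 → co [e1] e2 →
      ∃ ε'1 : E, co [ε1] ε'1 ∧ dg ε'1 ε2 e2)
    :
    (∀ (b : Bool) (e1 e1' : E) (A : Formula E) (Γ : List (Formula E)), co [e1] e1' →
      SuperLLO de co dg p b (Formula.wn e1 A :: Γ) →
      SuperLLO de co dg p b (Formula.wn e1' A :: Γ)) ∧
    (∀ (b : Bool) (es es' : List E) (As : List (Formula E)) (Γ : List (Formula E)),
      es.length = As.length →
      List.Forall₂ (fun ei e'i => co [ei] e'i) es es' →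
      SuperLLO de co dg p b (List.zipWith Formula.wn es As ++ Γ) →
      SuperLLO de co dg p b (List.zipWith Formula.wn es' As ++ Γ)) := by
  constructor
  · intro b e1 e1' A Γ hle h
    exact sub_main sb1 sb3 sb4 sb5 sb6 h _
      (List.Forall₂.cons (Or.inr ⟨e1, e1', A, hle, rfl, rfl⟩) (forall₂_sub_refl co Γ))
  · intro b es es' As Γ hlen hrel h
    refine sub_main sb1 sb3 sb4 sb5 sb6 h _
      (List.rel_append ?_ (forall₂_sub_refl co Γ))
    clear h hlen
    induction hrel generalizing As with
    | nil => simp [forall₂_sub_refl]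
    | @cons a b' es0 es0' hab _ ih =>
      cases As with
      | nil => simp [forall₂_sub_refl]
      | cons A As =>
        exact List.Forall₂.cons (Or.inr ⟨a, b', A, hab, rfl, rfl⟩) (ih As)

end SuperLLStmt
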